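/- Let k be a commutative ring and A a commutative k-algebra that is flat as a k-module. Let J ⊆ A be an ideal, S = A/J with quotient map π: A → S, and I_{Δ_A} = ker(μ_A: A⊗_kA → A) the kernel of the multiplication map. Then the natural (S⊗_kA)-linear map I_{Δ_A} ⊗_{A⊗_kA} (S⊗_kA) → S⊗_kA, induced by the inclusion I_{Δ_A} ⊆ A⊗_kA followed by the quotient map A⊗_kA → S⊗_kA, is injective, and its image equals the kernel of the map S⊗_kA → S determined by s⊗a ↦ s·π(a). (This is the affine form of the identification I_{Δ_A}|_{X×A} ≅ I_{Δ_X ⊂ X×A} for the closed embedding X = Spec S ⊆ A = Spec A.) -/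

import Mathlib

/-!
STATEMENT 0: For a commutative ring `k`, a flat commutative `k`-algebra `A`, an ideal
`J ⊆ A` with quotient `S = A/J`, and `I_{Δ_A} = ker(μ_A : A ⊗[k] A → A)`, the natural
map `I_{Δ_A} ⊗_{A⊗A} (S ⊗[k] A) → S ⊗[k] A` is injective with image the kernel of
`S ⊗[k] A → S`, `s ⊗ a ↦ s·π(a)`.
-/

open TensorProduct

noncomputable section

variable (k A : Type) [CommRing k] [CommRing A] [Algebra k A] (J : Ideal A)

/-- The multiplication map `μ_A : A ⊗[k] A → A`. -/
abbrev mulMap : A ⊗[k] A →ₐ[k] A := Algebra.TensorProduct.lmul' k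

/-- The ideal `I_{Δ_A}` of the diagonal: the kernel of the multiplication map. -/
abbrev diagIdeal : Ideal (A ⊗[k] A) := RingHom.ker (mulMap k A).toRingHom

/-- The quotient map `π : A → S = A/J`. -/
abbrev qmap : A →ₐ[k] A ⧸ J := Ideal.Quotient.mkₐ k J

/-- The map `A ⊗[k] A → S ⊗[k] A` induced by `π` on the first factor. -/
abbrev toSA : A ⊗[k] A →ₐ[k] (A ⧸ J) ⊗[k] A :=
  Algebra.TensorProduct.map (qmap k A J) (AlgHom.id k A)

/-- `S ⊗[k] A` as an `(A ⊗[k] A)`-algebra via `π ⊗ id`. -/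
def SAalgebra : Algebra (A ⊗[k] A) ((A ⧸ J) ⊗[k] A) := (toSA k A J).toRingHom.toAlgebra

attribute [local instance] SAalgebra

/-- The natural map `I_{Δ_A} ⊗_{A⊗A} (S ⊗[k] A) → S ⊗[k] A`, induced by the inclusion
`I_{Δ_A} ⊆ A ⊗[k] A` followed by the quotient map `A ⊗[k] A → S ⊗[k] A`. -/
def natMap :
    (diagIdeal k A) ⊗[A ⊗[k] A] ((A ⧸ J) ⊗[k] A) →ₗ[A ⊗[k] A] (A ⧸ J) ⊗[k] A :=
  TensorProduct.lift
    ((LinearMap.lsmul (A ⊗[k] A) ((A ⧸ J) ⊗[k] A)).comp (Submodule.subtype (diagIdeal k A)))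

/-- The map `S ⊗[k] A → S`, `s ⊗ a ↦ s · π(a)`. -/
def multMapSA : (A ⧸ J) ⊗[k] A →ₐ[k] A ⧸ J :=
  Algebra.TensorProduct.lift (AlgHom.id k (A ⧸ J)) (qmap k A J) fun _ _ => Commute.all _ _

/-- Auxiliary: smul via the `SAalgebra` structure is multiplication by `toSA`. -/
lemma smul_eq (r : A ⊗[k] A) (m : (A ⧸ J) ⊗[k] A) : r • m = toSA k A J r * m := rfl

lemma natMap_tmul (i : diagIdeal k A) (m : (A ⧸ J) ⊗[k] A) :
    natMap k A J (i ⊗ₜ m) = toSA k A J i.1 * m := by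
  simp [natMap, smul_eq]

lemma toSA_surjective : Function.Surjective (toSA k A J) := by
  intro y
  induction y using TensorProduct.induction_on with
  | zero => exact ⟨0, map_zero _⟩
  | tmul s a =>
    obtain ⟨b, rfl⟩ := Ideal.Quotient.mk_surjective s
    exact ⟨b ⊗ₜ a, by simp⟩
  | add u v hu hv =>
    obtain ⟨x, rfl⟩ := hu
    obtain ⟨y, rfl⟩ := hv
    exact ⟨x + y, map_add _ _ _⟩

lemma multMapSA_toSA (x : A ⊗[k] A) :
    multMapSA k A J (toSA k A J x) = qmap k A J (mulMap k A x) := by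
  induction x using TensorProduct.induction_on with
  | zero => simp
  | tmul a b => simp [multMapSA, Algebra.TensorProduct.lift_tmul]
  | add u v hu hv => simp only [map_add, hu, hv]

/-- The `A`-linear projection `A ⊗ A → I_{Δ}`, `x ↦ x - μ(x)⊗1`. -/
def pmap (x : A ⊗[k] A) : diagIdeal k A :=
  ⟨x - (mulMap k A x) ⊗ₜ 1, by
    simp [RingHom.mem_ker]⟩

lemma pmap_add (x y : A ⊗[k] A) : pmap k A (x + y) = pmap k A x + pmap k A y := by
  apply Subtype.ext
  simp only [pmap, map_add, Submodule.coe_add]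
  rw [add_tmul]
  ring

lemma toSA_rTensor (x : A ⊗[k] A) :
    LinearMap.rTensor A (qmap k A J).toLinearMap x = toSA k A J x := by
  induction x using TensorProduct.induction_on with
  | zero => simp
  | tmul a b => simp
  | add u v hu hv => simp only [map_add, hu, hv]

lemma psi_ker (x : A ⊗[k] A) (hx : toSA k A J x = 0) :
    pmap k A x ⊗ₜ[A ⊗[k] A] (1 : (A ⧸ J) ⊗[k] A) = 0 := by
  have hfg : Function.Exact ((J.restrictScalars k).subtype) (qmap k A J).toLinearMap := by
    rw [LinearMap.exact_iff]
    ext z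
    simp [Ideal.Quotient.eq_zero_iff_mem]
  have hg : Function.Surjective (qmap k A J).toLinearMap := Ideal.Quotient.mk_surjective
  have hexact := rTensor_exact (R := k) A hfg hg
  have hx' : LinearMap.rTensor A (qmap k A J).toLinearMap x = 0 := by
    rw [toSA_rTensor, hx]
  obtain ⟨y, hy⟩ := (hexact x).mp hx'
  have key : ∀ y : (J.restrictScalars k) ⊗[k] A,
      pmap k A (LinearMap.rTensor A (J.restrictScalars k).subtype y)
        ⊗ₜ[A ⊗[k] A] (1 : (A ⧸ J) ⊗[k] A) = 0 := by
    intro y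
    induction y using TensorProduct.induction_on with
    | zero =>
      rw [map_zero, show pmap k A (0 : A ⊗[k] A) = 0 from Subtype.ext (by simp [pmap]), zero_tmul]
    | tmul j a =>
      have h1 : pmap k A (LinearMap.rTensor A (J.restrictScalars k).subtype (j ⊗ₜ a))
          = (((j : A) ⊗ₜ[k] (1 : A)) : A ⊗[k] A) • pmap k A (((1 : A) ⊗ₜ[k] a) : A ⊗[k] A) := by
        apply Subtype.ext
        simp only [pmap, LinearMap.rTensor_tmul, Submodule.coe_subtype, SetLike.val_smul,
          smul_eq_mul]
        rw [mul_sub]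
        simp [Algebra.TensorProduct.tmul_mul_tmul]
      rw [h1, TensorProduct.smul_tmul, smul_eq, mul_one]
      have hj : qmap k A J (j : A) = 0 := by
        exact Ideal.Quotient.eq_zero_iff_mem.mpr j.2
      simp [hj]
    | add u v hu hv =>
      rw [map_add, pmap_add, add_tmul, hu, hv, add_zero]
  rw [← hy]
  exact key y

lemma psi_lift (t : (diagIdeal k A) ⊗[A ⊗[k] A] ((A ⧸ J) ⊗[k] A)) :
    ∀ x : A ⊗[k] A, toSA k A J x = natMap k A J t →
      pmap k A x ⊗ₜ[A ⊗[k] A] (1 : (A ⧸ J) ⊗[k] A) = t := by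
  induction t using TensorProduct.induction_on with
  | zero =>
    intro x hx
    rw [map_zero] at hx
    exact psi_ker k A J x hx
  | tmul i m =>
    intro x hx
    obtain ⟨x₀, hx₀⟩ := toSA_surjective k A J m
    have h1 : pmap k A (i.1 * x₀) = x₀ • i := by
      apply Subtype.ext
      have hi : mulMap k A i.1 = 0 := i.2
      simp only [pmap, map_mul, hi, zero_mul, TensorProduct.zero_tmul, sub_zero,
        SetLike.val_smul, smul_eq_mul]
      ring
    have h2 : toSA k A J (x - i.1 * x₀) = 0 := by
      rw [map_sub, hx, natMap_tmul, map_mul, hx₀, sub_self]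
    have e : pmap k A x ⊗ₜ[A ⊗[k] A] (1 : (A ⧸ J) ⊗[k] A)
        = pmap k A (i.1 * x₀) ⊗ₜ 1 + pmap k A (x - i.1 * x₀) ⊗ₜ 1 := by
      rw [← add_tmul, ← pmap_add]
      congr 1
      ring
    rw [e, psi_ker k A J _ h2, add_zero, h1, TensorProduct.smul_tmul, smul_eq, mul_one, hx₀]
  | add t₁ t₂ h₁ h₂ =>
    intro x hx
    obtain ⟨x₁, hx₁⟩ := toSA_surjective k A J (natMap k A J t₁)
    obtain ⟨x₂, hx₂⟩ := toSA_surjective k A J (natMap k A J t₂)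
    have h0 : toSA k A J (x - x₁ - x₂) = 0 := by
      rw [map_sub, map_sub, hx, hx₁, hx₂, map_add, sub_sub]
      ring
    have e : pmap k A x ⊗ₜ[A ⊗[k] A] (1 : (A ⧸ J) ⊗[k] A)
        = pmap k A x₁ ⊗ₜ 1 + pmap k A x₂ ⊗ₜ 1 + pmap k A (x - x₁ - x₂) ⊗ₜ 1 := by
      rw [← add_tmul, ← add_tmul, ← pmap_add, ← pmap_add]
      congr 1
      ring
    rw [e, h₁ x₁ hx₁, h₂ x₂ hx₂, psi_ker k A J _ h0, add_zero]

theorem statement0 [Module.Flat k A] :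
    Function.Injective (natMap k A J) ∧
      ∀ y : (A ⧸ J) ⊗[k] A, y ∈ LinearMap.range (natMap k A J) ↔ multMapSA k A J y = 0 := by
  constructor
  · intro t₁ t₂ h
    obtain ⟨x, hx⟩ := toSA_surjective k A J (natMap k A J t₁)
    rw [← psi_lift k A J t₁ x hx, psi_lift k A J t₂ x (hx.trans h)]
  · intro y
    constructor
    · rintro ⟨t, rfl⟩
      induction t using TensorProduct.induction_on with
      | zero => simp
      | tmul i m =>
        have hi : mulMap k A i.1 = 0 := i.2
        rw [natMap_tmul, map_mul, multMapSA_toSA, hi, map_zero, zero_mul]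
      | add u v hu hv => rw [map_add, map_add, hu, hv, add_zero]
    · intro hy
      obtain ⟨x, hx⟩ := toSA_surjective k A J y
      refine ⟨pmap k A x ⊗ₜ 1, ?_⟩
      rw [natMap_tmul, mul_one]
      have h0 : qmap k A J (mulMap k A x) = 0 := by rw [← multMapSA_toSA, hx, hy]
      simp [pmap, map_sub, hx, h0]


end
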